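/- Let x_k be the k-th REK iterate (Algorithm 1) with x_0 ∈ range(A^T), z_0 ∈ b + range(A), and x_⋆ = A^† b. Then E[||x_k - x_⋆||^2] ≤ (1/||A||_F^2)(1 - σ_r^2/||A||_F^2)^k ||z_0 - (b - A x_⋆)||^2 + E[(1 - (1/||A||_F^2)||A(x_{k-1}-x_⋆)/||x_{k-1}-x_⋆|| ||^2) ||x_{k-1} - x_⋆||^2], where σ_r is the smallest nonzero singular value of A. -/

import Mathlib

open Matrix BigOperators Finset

noncomputable def frob2 {m n : ℕ} (A : Matrix (Fin m) (Fin n) ℝ) : ℝ :=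
  ∑ i, ∑ j, (A i j) ^ 2

noncomputable def colNorm2 {m n : ℕ} (A : Matrix (Fin m) (Fin n) ℝ) (j : Fin n) : ℝ :=
  ∑ i, (A i j) ^ 2

noncomputable def rowNorm2 {m n : ℕ} (A : Matrix (Fin m) (Fin n) ℝ) (i : Fin m) : ℝ :=
  ∑ j, (A i j) ^ 2

noncomputable def colStep {m n : ℕ} (A : Matrix (Fin m) (Fin n) ℝ) (j : Fin n)
    (z : Fin m → ℝ) : Fin m → ℝ :=
  z - ((Aᵀ j ⬝ᵥ z) / colNorm2 A j) • Aᵀ j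

/-- One REK step: first an RK step on `Aᵀ z = 0` using column `j = p.1`, then an RK
step on `A x = b - z_k` using row `i = p.2` (with the freshly updated `z`). -/
noncomputable def rekStep {m n : ℕ} (A : Matrix (Fin m) (Fin n) ℝ)
    (b : Fin m → ℝ) (p : Fin n × Fin m) (s : (Fin m → ℝ) × (Fin n → ℝ)) :
    (Fin m → ℝ) × (Fin n → ℝ) :=
  let z' := colStep A p.1 s.1
  (z', s.2 - ((A p.2 ⬝ᵥ s.2 - b p.2 + z' p.2) / rowNorm2 A p.2) • A p.2)

/-- REK iterates: the head of the list is the pair of indices of the most recent step. -/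
noncomputable def rekIter {m n : ℕ} (A : Matrix (Fin m) (Fin n) ℝ)
    (b : Fin m → ℝ) (s0 : (Fin m → ℝ) × (Fin n → ℝ)) :
    List (Fin n × Fin m) → (Fin m → ℝ) × (Fin n → ℝ)
  | [] => s0
  | p :: l => rekStep A b p (rekIter A b s0 l)

/-- Probability of choosing the index pair `p` at a given REK step. -/
noncomputable def rekProb {m n : ℕ} (A : Matrix (Fin m) (Fin n) ℝ)
    (p : Fin n × Fin m) : ℝ :=
  (colNorm2 A p.1 / frob2 A) * (rowNorm2 A p.2 / frob2 A)

open scoped InnerProductSpace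

section Basic
variable {m n : ℕ} (A : Matrix (Fin m) (Fin n) ℝ)

lemma dot_self_nonneg' (v : Fin m → ℝ) : 0 ≤ v ⬝ᵥ v :=
  Finset.sum_nonneg fun i _ => mul_self_nonneg _

lemma colNorm2_nonneg (j : Fin n) : 0 ≤ colNorm2 A j :=
  Finset.sum_nonneg fun i _ => sq_nonneg _

lemma rowNorm2_nonneg (i : Fin m) : 0 ≤ rowNorm2 A i :=
  Finset.sum_nonneg fun j _ => sq_nonneg _

lemma frob2_nonneg : 0 ≤ frob2 A :=
  Finset.sum_nonneg fun i _ => Finset.sum_nonneg fun j _ => sq_nonneg _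

lemma frob2_eq_col : frob2 A = ∑ j, colNorm2 A j := by
  rw [frob2, Finset.sum_comm]; rfl

lemma frob2_eq_row : frob2 A = ∑ i, rowNorm2 A i := rfl

lemma frob2_pos (hA : A ≠ 0) : 0 < frob2 A := by
  rcases (frob2_nonneg A).eq_or_lt with h | h
  · exfalso; apply hA
    have h0 : ∀ i ∈ (univ : Finset (Fin m)), ∑ j, (A i j) ^ 2 = 0 := by
      intro i _
      have := (Finset.sum_eq_zero_iff_of_nonneg
        (fun i _ => Finset.sum_nonneg fun j _ => sq_nonneg (A i j))).1 h.symm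
      exact this i (mem_univ i)
    ext i j
    have := (Finset.sum_eq_zero_iff_of_nonneg (fun j _ => sq_nonneg (A i j))).1
      (h0 i (mem_univ i)) j (mem_univ j)
    simpa using pow_eq_zero_iff (n := 2) (by norm_num) |>.1 this
  · exact h

lemma col_eq_zero {j : Fin n} (h : colNorm2 A j = 0) : Aᵀ j = 0 := by
  funext i
  have := (Finset.sum_eq_zero_iff_of_nonneg (fun i _ => sq_nonneg (A i j))).1 h i (mem_univ i)
  simpa using pow_eq_zero_iff (n := 2) (by norm_num) |>.1 this

lemma row_eq_zero {i : Fin m} (h : rowNorm2 A i = 0) : A i = 0 := by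
  funext j
  have := (Finset.sum_eq_zero_iff_of_nonneg (fun j _ => sq_nonneg (A i j))).1 h j (mem_univ j)
  simpa using pow_eq_zero_iff (n := 2) (by norm_num) |>.1 this

lemma colNorm2_eq_dot (j : Fin n) : colNorm2 A j = Aᵀ j ⬝ᵥ Aᵀ j := by
  simp [colNorm2, dotProduct, sq, transpose]

lemma rowNorm2_eq_dot (i : Fin m) : rowNorm2 A i = A i ⬝ᵥ A i := by
  simp [rowNorm2, dotProduct, sq]

end Basic

section Step
variable {m n : ℕ} (A : Matrix (Fin m) (Fin n) ℝ)

lemma colStep_sub {r : Fin m → ℝ} (hr : Aᵀ *ᵥ r = 0) (j : Fin n) (z : Fin m → ℝ) :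
    colStep A j z - r = colStep A j (z - r) := by
  have h0 : Aᵀ j ⬝ᵥ r = 0 := congrFun hr j
  simp only [colStep, dotProduct_sub, h0, sub_zero]
  abel

lemma colStep_dot (j : Fin n) (w : Fin m → ℝ) :
    colStep A j w ⬝ᵥ colStep A j w = w ⬝ᵥ w - (Aᵀ j ⬝ᵥ w) ^ 2 / colNorm2 A j := by
  by_cases hc : colNorm2 A j = 0
  · have h0 := col_eq_zero A hc
    simp [colStep, h0, hc]
  · have hcd := colNorm2_eq_dot A j
    simp only [colStep, dotProduct_sub, sub_dotProduct, dotProduct_smul, smul_dotProduct,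
      smul_eq_mul]
    rw [dotProduct_comm (Aᵀ j) w] at *
    field_simp
    ring_nf
    rw [← hcd]
    ring

lemma colStep_range {w : Fin m → ℝ} (hw : ∃ u, w = A *ᵥ u) (j : Fin n) :
    ∃ u, colStep A j w = A *ᵥ u := by
  obtain ⟨u, rfl⟩ := hw
  refine ⟨u - ((Aᵀ j ⬝ᵥ (A *ᵥ u)) / colNorm2 A j) • (Pi.single j (1:ℝ) : Fin n → ℝ), ?_⟩
  have hcol : A *ᵥ Pi.single j 1 = Aᵀ j := by
    funext i
    simp [mulVec, dotProduct, Pi.single_apply]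
  rw [Matrix.mulVec_sub, Matrix.mulVec_smul, hcol]; rfl

lemma range_row_zero {w : Fin m → ℝ} (hw : ∃ u, w = A *ᵥ u) {i : Fin m}
    (h : rowNorm2 A i = 0) : w i = 0 := by
  obtain ⟨u, rfl⟩ := hw
  have h0 := row_eq_zero A h
  simp [mulVec, dotProduct, show A i = 0 from h0]

end Step

lemma dot_inner {n : ℕ} (x y : EuclideanSpace ℝ (Fin n)) : ⟪x, y⟫_ℝ = (⇑x) ⬝ᵥ (⇑y) := by
  simp [PiLp.inner_apply, dotProduct, RCLike.inner_apply]
  exact Finset.sum_congr rfl fun _ _ => mul_comm _ _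

lemma spec_key {m n : ℕ} (A : Matrix (Fin m) (Fin n) ℝ) (σr : ℝ)
    (hσr : IsLeast {σ : ℝ | 0 < σ ∧ ∃ u, u ≠ 0 ∧ Aᵀ *ᵥ (A *ᵥ u) = σ ^ 2 • u} σr)
    (u : Fin n → ℝ) :
    σr ^ 2 * (u ⬝ᵥ (Aᵀ *ᵥ (A *ᵥ u))) ≤ (Aᵀ *ᵥ (A *ᵥ u)) ⬝ᵥ (Aᵀ *ᵥ (A *ᵥ u)) := by
  have hB : (Aᵀ * A).IsHermitian := by simpa using Matrix.isHermitian_conjTranspose_mul_self A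
  set B := Aᵀ * A with hBdef
  have hBT : Bᵀ = B := by simpa using congrArg id hB
  have hBu : Aᵀ *ᵥ (A *ᵥ u) = B *ᵥ u := by rw [Matrix.mulVec_mulVec]
  have hdotB : ∀ v w : Fin n → ℝ, v ⬝ᵥ (B *ᵥ w) = (B *ᵥ v) ⬝ᵥ w := by
    intro v w
    rw [Matrix.dotProduct_mulVec, ← Matrix.mulVec_transpose, hBT]
  have hBpos : ∀ v : Fin n → ℝ, 0 ≤ v ⬝ᵥ (B *ᵥ v) := by
    intro v
    rw [hBdef, ← Matrix.mulVec_mulVec, Matrix.dotProduct_mulVec, Matrix.vecMul_transpose]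
    exact Finset.sum_nonneg fun i _ => mul_self_nonneg _
  set b := hB.eigenvectorBasis with hb
  set lam := hB.eigenvalues with hlam
  have heig : ∀ i, B *ᵥ ⇑(b i) = lam i • ⇑(b i) := hB.mulVec_eigenvectorBasis
  have hlam_nonneg : ∀ i, 0 ≤ lam i := by
    intro i
    have h1 : (⇑(b i)) ⬝ᵥ (B *ᵥ ⇑(b i)) = lam i * ((⇑(b i)) ⬝ᵥ (⇑(b i))) := by
      rw [heig i, dotProduct_smul]; rfl
    have h2 : (⇑(b i)) ⬝ᵥ (⇑(b i)) = 1 := by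
      rw [← dot_inner, real_inner_self_eq_norm_sq, b.orthonormal.1 i, one_pow]
    nlinarith [hBpos (⇑(b i))]
  have hlam_ge : ∀ i, 0 < lam i → σr ^ 2 ≤ lam i := by
    intro i hi
    have hne : (⇑(b i) : Fin n → ℝ) ≠ 0 := by
      intro h
      have hb0 : (b i : EuclideanSpace ℝ (Fin n)) = 0 := by
        ext j; exact congrFun h j
      exact b.orthonormal.ne_zero i hb0
    have hmem : Real.sqrt (lam i) ∈ {σ : ℝ | 0 < σ ∧ ∃ u, u ≠ 0 ∧ Aᵀ *ᵥ (A *ᵥ u) = σ ^ 2 • u} := by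
      refine ⟨Real.sqrt_pos.2 hi, ⇑(b i), hne, ?_⟩
      rw [show Aᵀ *ᵥ (A *ᵥ ⇑(b i)) = B *ᵥ ⇑(b i) by rw [Matrix.mulVec_mulVec],
        Real.sq_sqrt hi.le]
      exact heig i
    have h1 := hσr.2 hmem
    have h0 : 0 < σr := hσr.1.1
    nlinarith [Real.sq_sqrt hi.le, Real.sqrt_nonneg (lam i)]
  -- set up Euclidean vectors
  set x : EuclideanSpace ℝ (Fin n) := (WithLp.equiv 2 (Fin n → ℝ)).symm u with hx
  set y : EuclideanSpace ℝ (Fin n) := (WithLp.equiv 2 (Fin n → ℝ)).symm (B *ᵥ u) with hy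
  have hxc : (⇑x : Fin n → ℝ) = u := rfl
  have hyc : (⇑y : Fin n → ℝ) = B *ᵥ u := rfl
  have hbiy : ∀ i, ⟪b i, y⟫_ℝ = lam i * ⟪b i, x⟫_ℝ := by
    intro i
    rw [dot_inner, dot_inner, hxc, hyc, hdotB, heig i, smul_dotProduct]; rfl
  have hyb : ∀ i, ⟪y, b i⟫_ℝ = lam i * ⟪x, b i⟫_ℝ := by
    intro i; rw [real_inner_comm, hbiy i, real_inner_comm]
  have e1 : u ⬝ᵥ (B *ᵥ u) = ∑ i, lam i * (⟪x, b i⟫_ℝ)^2 := by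
    rw [show u ⬝ᵥ (B *ᵥ u) = ⟪x, y⟫_ℝ by rw [dot_inner, hxc, hyc]]
    rw [← b.sum_inner_mul_inner x y]
    refine Finset.sum_congr rfl fun i _ => ?_
    rw [hbiy i, real_inner_comm (b i) x]; ring
  have e2 : (B *ᵥ u) ⬝ᵥ (B *ᵥ u) = ∑ i, (lam i)^2 * (⟪x, b i⟫_ℝ)^2 := by
    rw [show (B *ᵥ u) ⬝ᵥ (B *ᵥ u) = ⟪y, y⟫_ℝ by rw [dot_inner, hyc]]
    rw [← b.sum_inner_mul_inner y y]
    refine Finset.sum_congr rfl fun i _ => ?_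
    rw [hbiy i, hyb i, real_inner_comm (b i) x]; ring
  rw [hBu, e1, e2, Finset.mul_sum]
  refine Finset.sum_le_sum fun i _ => ?_
  rcases (hlam_nonneg i).eq_or_lt with h | h
  · rw [← h]; ring_nf; rfl
  · have hs := mul_le_mul_of_nonneg_right (hlam_ge i h) (mul_nonneg h.le (sq_nonneg ⟪x, b i⟫_ℝ))
    nlinarith [hs]

section Exp
variable {m n : ℕ} (A : Matrix (Fin m) (Fin n) ℝ)

lemma dot_self_eq_sum_sq {k : ℕ} (v : Fin k → ℝ) : v ⬝ᵥ v = ∑ i, (v i) ^ 2 := by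
  simp [dotProduct, sq]

lemma mulVec_apply' (v : Fin n → ℝ) (i : Fin m) : (A *ᵥ v) i = A i ⬝ᵥ v := rfl

lemma sum_colFrac (hA : A ≠ 0) : ∑ j, colNorm2 A j / frob2 A = 1 := by
  rw [← Finset.sum_div, ← frob2_eq_col, div_self (frob2_pos A hA).ne']

lemma sum_rowFrac (hA : A ≠ 0) : ∑ i, rowNorm2 A i / frob2 A = 1 := by
  rw [← Finset.sum_div, ← frob2_eq_row, div_self (frob2_pos A hA).ne']

lemma zexp (hA : A ≠ 0) (w : Fin m → ℝ) :
    ∑ j, (colNorm2 A j / frob2 A) * (colStep A j w ⬝ᵥ colStep A j w)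
      = w ⬝ᵥ w - ((Aᵀ *ᵥ w) ⬝ᵥ (Aᵀ *ᵥ w)) / frob2 A := by
  have hF := (frob2_pos A hA).ne'
  have key : ∀ j, (colNorm2 A j / frob2 A) * (colStep A j w ⬝ᵥ colStep A j w)
      = (colNorm2 A j / frob2 A) * (w ⬝ᵥ w) - (Aᵀ j ⬝ᵥ w) ^ 2 / frob2 A := by
    intro j
    rw [colStep_dot]
    by_cases hc : colNorm2 A j = 0
    · simp [hc, col_eq_zero A hc]
    · field_simp
  rw [Finset.sum_congr rfl (fun j _ => key j), Finset.sum_sub_distrib, ← Finset.sum_mul,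
    sum_colFrac A hA, one_mul, ← Finset.sum_div]
  congr 1
  rw [dot_self_eq_sum_sq]
  rfl

lemma zbound (hA : A ≠ 0) (σr : ℝ)
    (hσr : IsLeast {σ : ℝ | 0 < σ ∧ ∃ u, u ≠ 0 ∧ Aᵀ *ᵥ (A *ᵥ u) = σ ^ 2 • u} σr)
    {w : Fin m → ℝ} (hw : ∃ u, w = A *ᵥ u) :
    ∑ j, (colNorm2 A j / frob2 A) * (colStep A j w ⬝ᵥ colStep A j w)
      ≤ (1 - σr ^ 2 / frob2 A) * (w ⬝ᵥ w) := by
  rw [zexp A hA w]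
  obtain ⟨u, rfl⟩ := hw
  have hs := spec_key A σr hσr u
  have hdu : u ⬝ᵥ (Aᵀ *ᵥ (A *ᵥ u)) = (A *ᵥ u) ⬝ᵥ (A *ᵥ u) := by
    rw [Matrix.dotProduct_mulVec, Matrix.vecMul_transpose]
  have hF := frob2_pos A hA
  have h1 : σr ^ 2 * ((A *ᵥ u) ⬝ᵥ (A *ᵥ u)) ≤ (Aᵀ *ᵥ (A *ᵥ u)) ⬝ᵥ (Aᵀ *ᵥ (A *ᵥ u)) := by
    rw [← hdu]; exact hs
  have h2 : σr ^ 2 * ((A *ᵥ u) ⬝ᵥ (A *ᵥ u)) / frob2 A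
      ≤ ((Aᵀ *ᵥ (A *ᵥ u)) ⬝ᵥ (Aᵀ *ᵥ (A *ᵥ u))) / frob2 A := by
    gcongr
  rw [sub_mul, one_mul, div_mul_eq_mul_div]
  exact sub_le_sub_left h2 _

lemma sum_rekProb_fst (hA : A ≠ 0) (f : Fin n → ℝ) :
    ∑ p : Fin n × Fin m, rekProb A p * f p.1
      = ∑ j, (colNorm2 A j / frob2 A) * f j := by
  rw [Fintype.sum_prod_type]
  refine Finset.sum_congr rfl fun j _ => ?_
  simp only [rekProb]
  calc ∑ i, colNorm2 A j / frob2 A * (rowNorm2 A i / frob2 A) * f j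
      = (∑ i, rowNorm2 A i / frob2 A) * (colNorm2 A j / frob2 A * f j) := by
        rw [Finset.sum_mul]; exact Finset.sum_congr rfl fun i _ => by ring
    _ = colNorm2 A j / frob2 A * f j := by rw [sum_rowFrac A hA, one_mul]

end Exp

section XStep
variable {m n : ℕ} (A : Matrix (Fin m) (Fin n) ℝ)

lemma xstep (b xs : _) (j : Fin n) (i : Fin m) (z : Fin m → ℝ) (x : Fin n → ℝ) :
    ((rekStep A b (j, i) (z, x)).2 - xs) ⬝ᵥ ((rekStep A b (j, i) (z, x)).2 - xs)
      = (x - xs) ⬝ᵥ (x - xs)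
        + (((colStep A j z - (b - A *ᵥ xs)) i) ^ 2 - (A i ⬝ᵥ (x - xs)) ^ 2)
            / rowNorm2 A i := by
  have hnum : A i ⬝ᵥ x - b i + (colStep A j z) i
      = A i ⬝ᵥ (x - xs) + (colStep A j z - (b - A *ᵥ xs)) i := by
    simp only [dotProduct_sub, Pi.sub_apply, mulVec_apply']
    ring
  have hstep : (rekStep A b (j, i) (z, x)).2
      = x - ((A i ⬝ᵥ x - b i + (colStep A j z) i) / rowNorm2 A i) • A i := rfl
  rw [hstep, hnum]
  set e := x - xs with he
  set c := (colStep A j z - (b - A *ᵥ xs)) i with hc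
  have hxe : x - ((A i ⬝ᵥ e + c) / rowNorm2 A i) • A i - xs
      = e - ((A i ⬝ᵥ e + c) / rowNorm2 A i) • A i := by
    rw [he]; abel
  rw [hxe]
  by_cases hρ : rowNorm2 A i = 0
  · have h0 := row_eq_zero A hρ
    simp [h0, hρ]
  · have hρd := rowNorm2_eq_dot A i
    simp only [dotProduct_sub, sub_dotProduct, dotProduct_smul, smul_dotProduct, smul_eq_mul]
    rw [dotProduct_comm (A i) e] at *
    field_simp
    ring_nf
    rw [← hρd]
    ring

lemma step_sum (hA : A ≠ 0) (b xs : _) (hls : Aᵀ *ᵥ (b - A *ᵥ xs) = 0)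
    (z : Fin m → ℝ) (x : Fin n → ℝ) (hw : ∃ u, z - (b - A *ᵥ xs) = A *ᵥ u) :
    ∑ p : Fin n × Fin m, rekProb A p *
        (((rekStep A b p (z, x)).2 - xs) ⬝ᵥ ((rekStep A b p (z, x)).2 - xs))
      = ((x - xs) ⬝ᵥ (x - xs)
          - (1 / frob2 A) * ((A *ᵥ (x - xs)) ⬝ᵥ (A *ᵥ (x - xs))))
        + (1 / frob2 A) * ∑ p : Fin n × Fin m, rekProb A p *
            (((rekStep A b p (z, x)).1 - (b - A *ᵥ xs)) ⬝ᵥ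
              ((rekStep A b p (z, x)).1 - (b - A *ᵥ xs))) := by
  have hF := frob2_pos A hA
  set r := b - A *ᵥ xs with hr
  set e := x - xs with he
  have hwj : ∀ j, ∃ u, colStep A j z - r = A *ᵥ u := by
    intro j
    rw [colStep_sub A hls]
    exact colStep_range A hw j
  -- per (j,i) term value
  have hterm : ∀ (j : Fin n) (i : Fin m),
      (rowNorm2 A i / frob2 A) *
        ((((colStep A j z - r) i) ^ 2 - (A i ⬝ᵥ e) ^ 2) / rowNorm2 A i)
      = (((colStep A j z - r) i) ^ 2 - (A i ⬝ᵥ e) ^ 2) / frob2 A := by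
    intro j i
    by_cases hρ : rowNorm2 A i = 0
    · have h0 := row_eq_zero A hρ
      have hwz : (colStep A j z - r) i = 0 := range_row_zero A (hwj j) hρ
      simp [hρ, hwz, h0]
    · field_simp
  -- inner sum over i for fixed j
  have hinner : ∀ j : Fin n,
      ∑ i, (rowNorm2 A i / frob2 A) *
          (e ⬝ᵥ e + (((colStep A j z - r) i) ^ 2 - (A i ⬝ᵥ e) ^ 2) / rowNorm2 A i)
        = e ⬝ᵥ e + (((colStep A j z - r) ⬝ᵥ (colStep A j z - r))
            - (A *ᵥ e) ⬝ᵥ (A *ᵥ e)) / frob2 A := by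
    intro j
    have expand : ∀ i : Fin m, (rowNorm2 A i / frob2 A) *
          (e ⬝ᵥ e + (((colStep A j z - r) i) ^ 2 - (A i ⬝ᵥ e) ^ 2) / rowNorm2 A i)
        = (rowNorm2 A i / frob2 A) * (e ⬝ᵥ e)
          + ((((colStep A j z - r) i) ^ 2 - (A i ⬝ᵥ e) ^ 2) / frob2 A) := by
      intro i
      rw [mul_add, hterm j i]
    rw [Finset.sum_congr rfl (fun i _ => expand i), Finset.sum_add_distrib,
      ← Finset.sum_mul, sum_rowFrac A hA, one_mul, ← Finset.sum_div]
    congr 1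
    rw [Finset.sum_sub_distrib, dot_self_eq_sum_sq, dot_self_eq_sum_sq]
    rfl
  -- main computation
  have hsplit : ∑ p : Fin n × Fin m, rekProb A p *
        (((rekStep A b p (z, x)).2 - xs) ⬝ᵥ ((rekStep A b p (z, x)).2 - xs))
      = ∑ j, (colNorm2 A j / frob2 A) *
          (e ⬝ᵥ e + (((colStep A j z - r) ⬝ᵥ (colStep A j z - r))
            - (A *ᵥ e) ⬝ᵥ (A *ᵥ e)) / frob2 A) := by
    rw [Fintype.sum_prod_type]
    refine Finset.sum_congr rfl fun j _ => ?_
    rw [← hinner j, Finset.mul_sum]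
    refine Finset.sum_congr rfl fun i _ => ?_
    rw [xstep A b xs j i z x]
    simp only [rekProb, ← hr, ← he]
    ring
  have hwsum : ∑ p : Fin n × Fin m, rekProb A p *
        (((rekStep A b p (z, x)).1 - r) ⬝ᵥ ((rekStep A b p (z, x)).1 - r))
      = ∑ j, (colNorm2 A j / frob2 A) *
          ((colStep A j z - r) ⬝ᵥ (colStep A j z - r)) := by
    have hfst : ∀ p : Fin n × Fin m, (rekStep A b p (z, x)).1 = colStep A p.1 z :=
      fun p => rfl
    simp only [hfst]
    exact sum_rekProb_fst A hA (fun j => (colStep A j z - r) ⬝ᵥ (colStep A j z - r))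
  rw [hsplit, hwsum]
  have expand2 : ∀ j : Fin n, (colNorm2 A j / frob2 A) *
        (e ⬝ᵥ e + (((colStep A j z - r) ⬝ᵥ (colStep A j z - r))
          - (A *ᵥ e) ⬝ᵥ (A *ᵥ e)) / frob2 A)
      = (colNorm2 A j / frob2 A) * (e ⬝ᵥ e)
        - (colNorm2 A j / frob2 A) * (((A *ᵥ e) ⬝ᵥ (A *ᵥ e)) / frob2 A)
        + (1 / frob2 A) * ((colNorm2 A j / frob2 A) *
            ((colStep A j z - r) ⬝ᵥ (colStep A j z - r))) := by
    intro j
    field_simp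
    ring
  rw [Finset.sum_congr rfl (fun j _ => expand2 j), Finset.sum_add_distrib,
    Finset.sum_sub_distrib, ← Finset.sum_mul, ← Finset.sum_mul, sum_colFrac A hA, one_mul,
    one_mul, ← Finset.mul_sum]
  ring
end XStep

section Glob
variable {m n : ℕ} (A : Matrix (Fin m) (Fin n) ℝ)

lemma dot_self_pos {k : ℕ} {v : Fin k → ℝ} (hv : v ≠ 0) : 0 < v ⬝ᵥ v := by
  rcases (dot_self_nonneg' v).eq_or_lt with h | h
  · exfalso; apply hv
    funext i
    have := (Finset.sum_eq_zero_iff_of_nonneg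
      (fun i _ => mul_self_nonneg (v i))).1 h.symm i (Finset.mem_univ i)
    have := mul_self_eq_zero.1 this
    simpa using this
  · exact h

lemma rekProb_nonneg (p : Fin n × Fin m) : 0 ≤ rekProb A p := by
  have hF := frob2_nonneg A
  exact mul_nonneg (div_nonneg (colNorm2_nonneg A _) hF) (div_nonneg (rowNorm2_nonneg A _) hF)

lemma prod_rekProb_nonneg {k : ℕ} (ω : Fin k → Fin n × Fin m) :
    0 ≤ ∏ t, rekProb A (ω t) :=
  Finset.prod_nonneg fun t _ => rekProb_nonneg A _

lemma sq_le_frob2 (σr : ℝ)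
    (hσr : IsLeast {σ : ℝ | 0 < σ ∧ ∃ u, u ≠ 0 ∧ Aᵀ *ᵥ (A *ᵥ u) = σ ^ 2 • u} σr) :
    σr ^ 2 ≤ frob2 A := by
  obtain ⟨⟨hpos, u, hu, hequ⟩, -⟩ := hσr
  have huu : 0 < u ⬝ᵥ u := dot_self_pos hu
  have h1 : u ⬝ᵥ (Aᵀ *ᵥ (A *ᵥ u)) = σr ^ 2 * (u ⬝ᵥ u) := by
    rw [hequ, dotProduct_smul]; rfl
  have h2 : u ⬝ᵥ (Aᵀ *ᵥ (A *ᵥ u)) = (A *ᵥ u) ⬝ᵥ (A *ᵥ u) := by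
    rw [Matrix.dotProduct_mulVec, Matrix.vecMul_transpose]
  have h3 : (A *ᵥ u) ⬝ᵥ (A *ᵥ u) ≤ frob2 A * (u ⬝ᵥ u) := by
    rw [dot_self_eq_sum_sq, frob2_eq_row, Finset.sum_mul]
    refine Finset.sum_le_sum fun i _ => ?_
    have hcs := Finset.sum_mul_sq_le_sq_mul_sq Finset.univ (fun j => A i j) (fun j => u j)
    calc (A i ⬝ᵥ u) ^ 2 = (∑ j, A i j * u j) ^ 2 := rfl
      _ ≤ (∑ j, (A i j) ^ 2) * ∑ j, (u j) ^ 2 := hcs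
      _ = rowNorm2 A i * (u ⬝ᵥ u) := by rw [dot_self_eq_sum_sq]; rfl
  nlinarith [h1, h2, h3, huu]

variable (b : Fin m → ℝ) (xs : Fin n → ℝ) (z0 : Fin m → ℝ) (x0 : Fin n → ℝ)

lemma iter_range (hls : Aᵀ *ᵥ (b - A *ᵥ xs) = 0)
    (hz0 : ∃ u, z0 - (b - A *ᵥ xs) = A *ᵥ u) (l : List (Fin n × Fin m)) :
    ∃ u, (rekIter A b (z0, x0) l).1 - (b - A *ᵥ xs) = A *ᵥ u := by
  induction l with
  | nil => exact hz0
  | cons p l ih =>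
    have h1 : (rekIter A b (z0, x0) (p :: l)).1
        = colStep A p.1 (rekIter A b (z0, x0) l).1 := rfl
    rw [h1, colStep_sub A hls]
    exact colStep_range A ih p.1

lemma sum_cons {k : ℕ} (f : (Fin (k + 1) → Fin n × Fin m) → ℝ) :
    ∑ ω, f ω = ∑ p, ∑ ω' : Fin k → Fin n × Fin m, f (Fin.cons p ω') := by
  rw [← Equiv.sum_comp (Fin.consEquiv fun _ : Fin (k + 1) => Fin n × Fin m) f,
    Fintype.sum_prod_type]
  rfl

lemma iter_decomp {k : ℕ} (ω : Fin (k + 1) → Fin n × Fin m) :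
    rekIter A b (z0, x0) (List.ofFn ω)
      = rekStep A b (ω 0) (rekIter A b (z0, x0) (List.ofFn (Fin.tail ω))) := by
  rw [List.ofFn_succ]; rfl

lemma sum_traj {k : ℕ} (G : (Fin n × Fin m) → (Fin k → Fin n × Fin m) → ℝ) :
    ∑ ω : Fin (k + 1) → Fin n × Fin m,
        (∏ t, rekProb A (ω t)) * G (ω 0) (Fin.tail ω)
      = ∑ ω' : Fin k → Fin n × Fin m,
          (∏ t, rekProb A (ω' t)) * ∑ p, rekProb A p * G p ω' := by
  rw [sum_cons]
  rw [Finset.sum_comm]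
  refine Finset.sum_congr rfl fun ω' _ => ?_
  rw [Finset.mul_sum]
  refine Finset.sum_congr rfl fun p _ => ?_
  rw [Fin.prod_univ_succ]
  simp only [Fin.cons_zero, Fin.cons_succ, Fin.tail_cons]
  ring

end Glob

section Glob2
variable {m n : ℕ} (A : Matrix (Fin m) (Fin n) ℝ)
variable (b : Fin m → ℝ) (xs : Fin n → ℝ) (z0 : Fin m → ℝ) (x0 : Fin n → ℝ)

lemma wsum_succ_eq (k : ℕ) :
    ∑ ω : Fin (k + 1) → Fin n × Fin m, (∏ t, rekProb A (ω t)) *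
        (((rekIter A b (z0, x0) (List.ofFn ω)).1 - (b - A *ᵥ xs)) ⬝ᵥ
          ((rekIter A b (z0, x0) (List.ofFn ω)).1 - (b - A *ᵥ xs)))
      = ∑ ω' : Fin k → Fin n × Fin m, (∏ t, rekProb A (ω' t)) *
          ∑ p, rekProb A p *
            (((rekStep A b p (rekIter A b (z0, x0) (List.ofFn ω'))).1 - (b - A *ᵥ xs)) ⬝ᵥ
              ((rekStep A b p (rekIter A b (z0, x0) (List.ofFn ω'))).1 - (b - A *ᵥ xs))) := by
  rw [← sum_traj A (fun p ω' =>
    ((rekStep A b p (rekIter A b (z0, x0) (List.ofFn ω'))).1 - (b - A *ᵥ xs)) ⬝ᵥ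
      ((rekStep A b p (rekIter A b (z0, x0) (List.ofFn ω'))).1 - (b - A *ᵥ xs)))]
  refine Finset.sum_congr rfl fun ω _ => ?_
  rw [iter_decomp A b z0 x0 ω]

lemma esum_succ_eq (k : ℕ) :
    ∑ ω : Fin (k + 1) → Fin n × Fin m, (∏ t, rekProb A (ω t)) *
        (((rekIter A b (z0, x0) (List.ofFn ω)).2 - xs) ⬝ᵥ
          ((rekIter A b (z0, x0) (List.ofFn ω)).2 - xs))
      = ∑ ω' : Fin k → Fin n × Fin m, (∏ t, rekProb A (ω' t)) *
          ∑ p, rekProb A p *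
            (((rekStep A b p (rekIter A b (z0, x0) (List.ofFn ω'))).2 - xs) ⬝ᵥ
              ((rekStep A b p (rekIter A b (z0, x0) (List.ofFn ω'))).2 - xs)) := by
  rw [← sum_traj A (fun p ω' =>
    ((rekStep A b p (rekIter A b (z0, x0) (List.ofFn ω'))).2 - xs) ⬝ᵥ
      ((rekStep A b p (rekIter A b (z0, x0) (List.ofFn ω'))).2 - xs))]
  refine Finset.sum_congr rfl fun ω _ => ?_
  rw [iter_decomp A b z0 x0 ω]

lemma step_wbound (hA : A ≠ 0) (σr : ℝ)
    (hσr : IsLeast {σ : ℝ | 0 < σ ∧ ∃ u, u ≠ 0 ∧ Aᵀ *ᵥ (A *ᵥ u) = σ ^ 2 • u} σr)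
    (hls : Aᵀ *ᵥ (b - A *ᵥ xs) = 0)
    (s : (Fin m → ℝ) × (Fin n → ℝ)) (hs : ∃ u, s.1 - (b - A *ᵥ xs) = A *ᵥ u) :
    ∑ p, rekProb A p *
        (((rekStep A b p s).1 - (b - A *ᵥ xs)) ⬝ᵥ ((rekStep A b p s).1 - (b - A *ᵥ xs)))
      ≤ (1 - σr ^ 2 / frob2 A) *
          ((s.1 - (b - A *ᵥ xs)) ⬝ᵥ (s.1 - (b - A *ᵥ xs))) := by
  have h1 : ∀ p : Fin n × Fin m, (rekStep A b p s).1 = colStep A p.1 s.1 := fun _ => rfl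
  simp only [h1]
  rw [sum_rekProb_fst A hA (fun j =>
    (colStep A j s.1 - (b - A *ᵥ xs)) ⬝ᵥ (colStep A j s.1 - (b - A *ᵥ xs)))]
  have h2 : ∀ j, colStep A j s.1 - (b - A *ᵥ xs) = colStep A j (s.1 - (b - A *ᵥ xs)) :=
    fun j => colStep_sub A hls j s.1
  simp only [h2]
  exact zbound A hA σr hσr hs

lemma wsum_bound (hA : A ≠ 0) (σr : ℝ)
    (hσr : IsLeast {σ : ℝ | 0 < σ ∧ ∃ u, u ≠ 0 ∧ Aᵀ *ᵥ (A *ᵥ u) = σ ^ 2 • u} σr)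
    (hls : Aᵀ *ᵥ (b - A *ᵥ xs) = 0)
    (hz0 : ∃ u, z0 - (b - A *ᵥ xs) = A *ᵥ u) (k : ℕ) :
    ∑ ω : Fin k → Fin n × Fin m, (∏ t, rekProb A (ω t)) *
        (((rekIter A b (z0, x0) (List.ofFn ω)).1 - (b - A *ᵥ xs)) ⬝ᵥ
          ((rekIter A b (z0, x0) (List.ofFn ω)).1 - (b - A *ᵥ xs)))
      ≤ (1 - σr ^ 2 / frob2 A) ^ k *
          ((z0 - (b - A *ᵥ xs)) ⬝ᵥ (z0 - (b - A *ᵥ xs))) := by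
  have hq0 : 0 ≤ 1 - σr ^ 2 / frob2 A := by
    rw [sub_nonneg, div_le_one (frob2_pos A hA)]
    exact sq_le_frob2 A σr hσr
  induction k with
  | zero =>
    apply le_of_eq
    rw [pow_zero, one_mul]
    have hu : ∀ ω : Fin 0 → Fin n × Fin m, (∏ t, rekProb A (ω t)) *
        (((rekIter A b (z0, x0) (List.ofFn ω)).1 - (b - A *ᵥ xs)) ⬝ᵥ
          ((rekIter A b (z0, x0) (List.ofFn ω)).1 - (b - A *ᵥ xs)))
        = (z0 - (b - A *ᵥ xs)) ⬝ᵥ (z0 - (b - A *ᵥ xs)) := by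
      intro ω
      rw [List.ofFn_zero]
      simp [rekIter]
    rw [Finset.sum_congr rfl fun ω _ => hu ω, Finset.sum_const]
    simp
  | succ k ih =>
    rw [wsum_succ_eq]
    calc ∑ ω' : Fin k → Fin n × Fin m, (∏ t, rekProb A (ω' t)) *
          ∑ p, rekProb A p *
            (((rekStep A b p (rekIter A b (z0, x0) (List.ofFn ω'))).1 - (b - A *ᵥ xs)) ⬝ᵥ
              ((rekStep A b p (rekIter A b (z0, x0) (List.ofFn ω'))).1 - (b - A *ᵥ xs)))
        ≤ ∑ ω' : Fin k → Fin n × Fin m, (∏ t, rekProb A (ω' t)) *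
            ((1 - σr ^ 2 / frob2 A) *
              (((rekIter A b (z0, x0) (List.ofFn ω')).1 - (b - A *ᵥ xs)) ⬝ᵥ
                ((rekIter A b (z0, x0) (List.ofFn ω')).1 - (b - A *ᵥ xs)))) := by
          refine Finset.sum_le_sum fun ω' _ => ?_
          exact mul_le_mul_of_nonneg_left
            (step_wbound A b xs hA σr hσr hls _ (iter_range A b xs z0 x0 hls hz0 _))
            (prod_rekProb_nonneg A ω')
      _ = (1 - σr ^ 2 / frob2 A) * ∑ ω' : Fin k → Fin n × Fin m, (∏ t, rekProb A (ω' t)) *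
            (((rekIter A b (z0, x0) (List.ofFn ω')).1 - (b - A *ᵥ xs)) ⬝ᵥ
              ((rekIter A b (z0, x0) (List.ofFn ω')).1 - (b - A *ᵥ xs))) := by
          rw [Finset.mul_sum]
          exact Finset.sum_congr rfl fun ω' _ => by ring
      _ ≤ (1 - σr ^ 2 / frob2 A) * ((1 - σr ^ 2 / frob2 A) ^ k *
            ((z0 - (b - A *ᵥ xs)) ⬝ᵥ (z0 - (b - A *ᵥ xs)))) :=
          mul_le_mul_of_nonneg_left ih hq0
      _ = (1 - σr ^ 2 / frob2 A) ^ (k + 1) *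
            ((z0 - (b - A *ᵥ xs)) ⬝ᵥ (z0 - (b - A *ᵥ xs))) := by ring

end Glob2

/-- Theorem 3: with `σr` the smallest nonzero singular value of `A`
(characterized as the least element of the set of nonzero singular values, i.e.
`σ > 0` such that `σ²` is an eigenvalue of `AᵀA`), the REK iterates satisfy
`E[‖x_k - x⋆‖²] ≤ (1/‖A‖_F²)(1-σr²/‖A‖_F²)^k ‖z_0-(b-Ax⋆)‖²
  + E[‖x_{k-1}-x⋆‖² - ‖A(x_{k-1}-x⋆)‖²/‖A‖_F²]`,
the second term being the stated interpretation of
`E[(1 - ‖A(x_{k-1}-x⋆)/‖x_{k-1}-x⋆‖‖²/‖A‖_F²)‖x_{k-1}-x⋆‖²]`. -/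
theorem rek_squared_error_bound {m n : ℕ}
    (A : Matrix (Fin m) (Fin n) ℝ) (hA : A ≠ 0)
    (σr : ℝ)
    (hσr : IsLeast {σ : ℝ | 0 < σ ∧ ∃ u, u ≠ 0 ∧ Aᵀ *ᵥ (A *ᵥ u) = σ ^ 2 • u} σr)
    (b : Fin m → ℝ) (xs : Fin n → ℝ)
    (hls : Aᵀ *ᵥ (b - A *ᵥ xs) = 0) (hxs : ∃ y, xs = Aᵀ *ᵥ y)
    (x0 : Fin n → ℝ) (hx0 : ∃ u, x0 = Aᵀ *ᵥ u)
    (z0 : Fin m → ℝ) (hz0 : ∃ y, z0 = b + A *ᵥ y)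
    (k : ℕ) (hk : 0 < k) :
    ∑ ω : Fin k → Fin n × Fin m,
        (∏ t, rekProb A (ω t)) *
          (((rekIter A b (z0, x0) (List.ofFn ω)).2 - xs) ⬝ᵥ
            ((rekIter A b (z0, x0) (List.ofFn ω)).2 - xs))
      ≤ (1 / frob2 A) * (1 - σr ^ 2 / frob2 A) ^ k
          * ((z0 - (b - A *ᵥ xs)) ⬝ᵥ (z0 - (b - A *ᵥ xs)))
        + ∑ ω' : Fin (k - 1) → Fin n × Fin m,
            (∏ t, rekProb A (ω' t)) *
              ((((rekIter A b (z0, x0) (List.ofFn ω')).2 - xs) ⬝ᵥ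
                  ((rekIter A b (z0, x0) (List.ofFn ω')).2 - xs))
                - (1 / frob2 A) *
                  ((A *ᵥ ((rekIter A b (z0, x0) (List.ofFn ω')).2 - xs)) ⬝ᵥ
                    (A *ᵥ ((rekIter A b (z0, x0) (List.ofFn ω')).2 - xs)))) := by
  obtain ⟨k', rfl⟩ := Nat.exists_eq_succ_of_ne_zero hk.ne'
  simp only [Nat.succ_sub_one, Nat.succ_eq_add_one]
  have hF := frob2_pos A hA
  have hz0w : ∃ u, z0 - (b - A *ᵥ xs) = A *ᵥ u := by
    obtain ⟨y, rfl⟩ := hz0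
    exact ⟨y + xs, by rw [Matrix.mulVec_add]; abel⟩
  -- expectation identity at step k'+1
  have hmain : ∑ ω : Fin (k' + 1) → Fin n × Fin m,
        (∏ t, rekProb A (ω t)) *
          (((rekIter A b (z0, x0) (List.ofFn ω)).2 - xs) ⬝ᵥ
            ((rekIter A b (z0, x0) (List.ofFn ω)).2 - xs))
      = (∑ ω' : Fin k' → Fin n × Fin m,
            (∏ t, rekProb A (ω' t)) *
              ((((rekIter A b (z0, x0) (List.ofFn ω')).2 - xs) ⬝ᵥ
                  ((rekIter A b (z0, x0) (List.ofFn ω')).2 - xs))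
                - (1 / frob2 A) *
                  ((A *ᵥ ((rekIter A b (z0, x0) (List.ofFn ω')).2 - xs)) ⬝ᵥ
                    (A *ᵥ ((rekIter A b (z0, x0) (List.ofFn ω')).2 - xs)))))
        + (1 / frob2 A) * ∑ ω : Fin (k' + 1) → Fin n × Fin m,
            (∏ t, rekProb A (ω t)) *
              (((rekIter A b (z0, x0) (List.ofFn ω)).1 - (b - A *ᵥ xs)) ⬝ᵥ
                ((rekIter A b (z0, x0) (List.ofFn ω)).1 - (b - A *ᵥ xs))) := by
    rw [esum_succ_eq, wsum_succ_eq]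
    have hterm : ∀ ω' : Fin k' → Fin n × Fin m,
        (∏ t, rekProb A (ω' t)) *
          ∑ p, rekProb A p *
            (((rekStep A b p (rekIter A b (z0, x0) (List.ofFn ω'))).2 - xs) ⬝ᵥ
              ((rekStep A b p (rekIter A b (z0, x0) (List.ofFn ω'))).2 - xs))
        = (∏ t, rekProb A (ω' t)) *
              ((((rekIter A b (z0, x0) (List.ofFn ω')).2 - xs) ⬝ᵥ
                  ((rekIter A b (z0, x0) (List.ofFn ω')).2 - xs))
                - (1 / frob2 A) *
                  ((A *ᵥ ((rekIter A b (z0, x0) (List.ofFn ω')).2 - xs)) ⬝ᵥ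
                    (A *ᵥ ((rekIter A b (z0, x0) (List.ofFn ω')).2 - xs))))
          + (1 / frob2 A) * ((∏ t, rekProb A (ω' t)) *
              ∑ p, rekProb A p *
                (((rekStep A b p (rekIter A b (z0, x0) (List.ofFn ω'))).1 - (b - A *ᵥ xs)) ⬝ᵥ
                  ((rekStep A b p (rekIter A b (z0, x0) (List.ofFn ω'))).1 - (b - A *ᵥ xs)))) := by
      intro ω'
      have hs := step_sum A hA b xs hls (rekIter A b (z0, x0) (List.ofFn ω')).1
        (rekIter A b (z0, x0) (List.ofFn ω')).2
        (iter_range A b xs z0 x0 hls hz0w (List.ofFn ω'))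
      have hp : ((rekIter A b (z0, x0) (List.ofFn ω')).1,
          (rekIter A b (z0, x0) (List.ofFn ω')).2) = rekIter A b (z0, x0) (List.ofFn ω') :=
        Prod.mk.eta
      rw [hp] at hs
      rw [hs]
      ring
    rw [Finset.sum_congr rfl fun ω' _ => hterm ω', Finset.sum_add_distrib, ← Finset.mul_sum]
  rw [hmain]
  have hw := wsum_bound A b xs z0 x0 hA σr hσr hls hz0w (k' + 1)
  have h1F : 0 ≤ 1 / frob2 A := by positivity
  have h2 := mul_le_mul_of_nonneg_left hw h1F
  have h3 : 1 / frob2 A * ((1 - σr ^ 2 / frob2 A) ^ (k' + 1) *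
      ((z0 - (b - A *ᵥ xs)) ⬝ᵥ (z0 - (b - A *ᵥ xs))))
      = 1 / frob2 A * (1 - σr ^ 2 / frob2 A) ^ (k' + 1) *
        ((z0 - (b - A *ᵥ xs)) ⬝ᵥ (z0 - (b - A *ᵥ xs))) := by ring
  linarith
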